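/- Let E ⊆ U be a field extension and O a valuation ring of U with valuation val. For x ∈ U and c ∈ E, the value val(x−c) is the maximum of the set {val(x−d) : d ∈ E} if and only if the residue-value rv(x−c) := (x−c)·(1+m)⁻¹ does not lie in rv(E), where m is the maximal ideal of O. -/

import Mathlib

/-- Let `E ⊆ U` be a field extension and `v` the valuation of a
valuation ring `O` of `U` (Mathlib's multiplicative convention: the paper's
`val(a) ≤ val(b)` corresponds to `v b ≤ v a`, the maximal ideal is `{u | v u < 1}`,
and `rv(a) ∈ rv(E)` means `∃ e ∈ E, e ≠ 0 ∧ v (a / e - 1) < 1`).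
For `x ∈ U` and `c ∈ E`, `val (x - c)` is the maximum of `val (x - E)`
iff `rv (x - c) ∉ rv E`. -/
theorem stmt0 {U Γ : Type*} [Field U] [LinearOrderedCommGroupWithZero Γ]
    (v : Valuation U Γ) (E : Subfield U) (x c : U) (hc : c ∈ E) :
    (∀ d ∈ E, v (x - c) ≤ v (x - d)) ↔
      ¬ ∃ e ∈ E, e ≠ 0 ∧ v ((x - c) / e - 1) < 1 := by
  constructor
  · rintro hmax ⟨e, heE, he0, hlt⟩
    have hve : v e ≠ 0 := fun h => he0 (v.zero_iff.mp h)
    have hxd : v (x - (c + e)) < v e := by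
      have : x - (c + e) = e * ((x - c) / e - 1) := by field_simp; ring
      rw [this, v.map_mul]
      calc v e * v ((x - c) / e - 1) < v e * 1 :=
            mul_lt_mul_of_pos_left hlt (zero_lt_iff.mpr hve)
        _ = v e := mul_one _
    have hxc : v (x - c) = v e := by
      have : x - c = e * (1 + ((x - c) / e - 1)) := by field_simp; ring
      rw [this, v.map_mul, v.map_one_add_of_lt hlt, mul_one]
    exact absurd (hmax (c + e) (E.add_mem hc heE)) (by rw [hxc]; exact not_le.mpr hxd)
  · intro h d hd
    by_contra hlt
    push_neg at hlt
    have hne : d ≠ c := by rintro rfl; exact lt_irrefl _ hlt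
    have he0 : d - c ≠ 0 := sub_ne_zero.mpr hne
    have hve : v (d - c) = v (x - c) := by
      have : d - c = (x - c) - (x - d) := by ring
      rw [this, v.map_sub_eq_of_lt_left hlt]
    refine h ⟨d - c, E.sub_mem hd hc, he0, ?_⟩
    have heq : (x - c) / (d - c) - 1 = (x - d) / (d - c) := by field_simp; ring
    rw [heq, v.map_div, hve]
    have h0 : v (x - c) ≠ 0 := fun hz => by simp [hz] at hlt
    have h2 : (v (x - c))⁻¹ * v (x - d) < (v (x - c))⁻¹ * v (x - c) :=
      mul_lt_mul_of_pos_left hlt (zero_lt_iff.mpr (inv_ne_zero h0))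
    rwa [inv_mul_cancel₀ h0, ← div_eq_inv_mul] at h2
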